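/- (Parameter-shift rule) The function f is differentiable and f′(θ) = (f(θ + π/2) − f(θ − π/2)) / 2 for all θ ∈ ℝ. -/

import Mathlib

open Matrix
open scoped ComplexOrder

lemma exp_smul_involution {N : Type*} [Fintype N] [DecidableEq N]
    {G : Matrix N N ℂ} (hG2 : G * G = 1) (z : ℂ) :
    NormedSpace.exp (z • G) = Complex.cosh z • 1 + Complex.sinh z • G := by
  have hG2' : G ^ 2 = 1 := by rw [pow_two, hG2]
  rw [NormedSpace.exp_eq_tsum (𝕂 := ℂ)]
  refine HasSum.tsum_eq ?_
  refine HasSum.even_add_odd ?_ ?_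
  · have h := (Complex.hasSum_cosh z).smul_const (1 : Matrix N N ℂ)
    convert h using 2 with k
    case e'_3 => rfl
    rw [smul_pow, pow_mul G, hG2', one_pow, smul_smul]
    congr 1
    rw [div_eq_mul_inv, mul_comm]
  · have h := (Complex.hasSum_sinh z).smul_const G
    convert h using 2 with k
    case e'_3 => rfl
    rw [smul_pow, pow_succ G, pow_mul G, hG2', one_pow, one_mul, smul_smul]
    congr 1
    rw [div_eq_mul_inv, mul_comm]

/-- parameter-shift rule: with `H` Hermitian, `ρ` a density matrix, `G` Hermitian
with `G² = I`, `V, W` unitary, and `f(θ) = Tr(ρ · W† · exp(iθG/2) · V†HV · exp(−iθG/2) · W)`,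
`f` is differentiable and `f′(θ) = (f(θ + π/2) − f(θ − π/2)) / 2` for all `θ`. -/
theorem stmt8 (n : ℕ) (hn : 1 ≤ n)
    (H ρ G V W : Matrix (Fin (2 ^ n)) (Fin (2 ^ n)) ℂ)
    (hH : H.IsHermitian)
    (hρherm : ρ.IsHermitian) (hρpsd : ρ.PosSemidef) (hρtr : ρ.trace = 1)
    (hGherm : G.IsHermitian) (hG2 : G * G = 1)
    (hV : V ∈ Matrix.unitaryGroup (Fin (2 ^ n)) ℂ)
    (hW : W ∈ Matrix.unitaryGroup (Fin (2 ^ n)) ℂ)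
    (f : ℝ → ℂ)
    (hf : ∀ θ : ℝ, f θ =
      Matrix.trace (ρ * Wᴴ * NormedSpace.exp (((Complex.I * θ) / 2) • G) *
        (Vᴴ * H * V) * NormedSpace.exp ((-((Complex.I * θ) / 2)) • G) * W)) :
    Differentiable ℝ f ∧
      ∀ θ : ℝ, deriv f θ = (f (θ + Real.pi / 2) - f (θ - Real.pi / 2)) / 2 := by
  set A := Vᴴ * H * V with hA
  set T1 := Matrix.trace (ρ * Wᴴ * A * W) with hT1
  set T2 := Matrix.trace (ρ * Wᴴ * G * A * W) with hT2
  set T3 := Matrix.trace (ρ * Wᴴ * A * G * W) with hT3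
  set T4 := Matrix.trace (ρ * Wᴴ * G * A * G * W) with hT4
  set a := (T1 + T4) / 2 with ha
  set b := (T1 - T4) / 2 with hb
  set d := Complex.I * (T2 - T3) / 2 with hd
  have key : ∀ θ : ℝ, f θ = a + b * (Real.cos θ : ℂ) + d * (Real.sin θ : ℂ) := by
    intro θ
    set z : ℂ := (Complex.I * (θ : ℂ)) / 2 with hzdef
    set c := Complex.cosh z with hc
    set s := Complex.sinh z with hs
    have hz2 : 2 * z = (θ : ℂ) * Complex.I := by rw [hzdef]; ring
    have hpyth := Complex.cosh_sq_sub_sinh_sq z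
    rw [← hc, ← hs] at hpyth
    have h := Complex.cosh_two_mul z
    rw [hz2, Complex.cosh_mul_I, ← hc, ← hs] at h
    have h' := Complex.sinh_two_mul z
    rw [hz2, Complex.sinh_mul_I, ← hc, ← hs] at h'
    have h1 : c * c = ((Real.cos θ : ℂ) + 1) / 2 := by
      rw [Complex.ofReal_cos]
      linear_combination -h / 2 + hpyth / 2
    have h2 : s * s = ((Real.cos θ : ℂ) - 1) / 2 := by
      rw [Complex.ofReal_cos]
      linear_combination -h / 2 - hpyth / 2
    have h3 : c * s = Complex.I * (Real.sin θ : ℂ) / 2 := by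
      rw [Complex.ofReal_sin]
      linear_combination -h' / 2
    have hEθ : NormedSpace.exp (z • G) = c • 1 + s • G := exp_smul_involution hG2 z
    have hE'θ : NormedSpace.exp ((-z) • G) = c • 1 - s • G := by
      rw [exp_smul_involution hG2, Complex.cosh_neg, Complex.sinh_neg, ← hc, ← hs,
        neg_smul, sub_eq_add_neg]
    rw [hf θ, hEθ, hE'θ]
    simp only [Matrix.mul_add, Matrix.add_mul, Matrix.mul_sub, Matrix.sub_mul,
      Matrix.mul_smul, Matrix.smul_mul, Matrix.mul_one, trace_add, trace_sub, trace_smul,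
      smul_eq_mul]
    rw [ha, hb, hd]
    linear_combination T1 * h1 + (T2 - T3) * h3 - T4 * h2
  have hD : ∀ θ : ℝ, HasDerivAt f (b * (-(Real.sin θ : ℂ)) + d * (Real.cos θ : ℂ)) θ := by
    intro θ
    have hcos : HasDerivAt (fun θ : ℝ => ((Real.cos θ : ℂ))) (-(Real.sin θ : ℂ)) θ := by
      have := (Real.hasDerivAt_cos θ).ofReal_comp
      simpa using this
    have hsin : HasDerivAt (fun θ : ℝ => ((Real.sin θ : ℂ))) ((Real.cos θ : ℂ)) θ := by
      have := (Real.hasDerivAt_sin θ).ofReal_comp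
      simpa using this
    have : HasDerivAt (fun θ : ℝ => a + b * (Real.cos θ : ℂ) + d * (Real.sin θ : ℂ))
        (b * (-(Real.sin θ : ℂ)) + d * (Real.cos θ : ℂ)) θ :=
      ((hcos.const_mul b).const_add a).add (hsin.const_mul d)
    exact this.congr_of_eventuallyEq (Filter.Eventually.of_forall key)
  constructor
  · exact fun θ => (hD θ).differentiableAt
  · intro θ
    rw [(hD θ).deriv, key (θ + Real.pi / 2), key (θ - Real.pi / 2)]
    rw [Real.cos_add, Real.sin_add, Real.cos_sub, Real.sin_sub,
      Real.cos_pi_div_two, Real.sin_pi_div_two]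
    push_cast
    ring
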